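/- Fix a real number ν with 1 < ν < √2. For ε > 0 small enough that ν·tan(ν·ε) ∈ (0,1), set t_ε = ν·artanh(ν·tan(ν·ε)) + ν·ε, h₁(t) = cos(νε)·cosh((t − νε)/ν) − ν·sin(νε)·sinh((t − νε)/ν), and define the slope s_ε = (cos(6ε/ν) − h₁(t_ε)) / (3νε·(2/ν² − 1)). Then s_ε / sin(6ε/ν) converges to (ν⁶ + ν⁴ − 36) / (36·(2 − ν²)) as ε → 0⁺. -/

import Mathlib

open Filter

noncomputable def Real.artanh' (x : ℝ) : ℝ := (1 / 2) * Real.log ((1 + x) / (1 - x))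

lemma exp_artanh {x : ℝ} (h1 : -1 < x) (h2 : x < 1) :
    Real.exp (Real.artanh' x) = Real.sqrt ((1 + x) / (1 - x)) := by
  have hr : 0 < (1 + x) / (1 - x) := div_pos (by linarith) (by linarith)
  have he : Real.exp (Real.artanh' x) ^ 2 = (1 + x) / (1 - x) := by
    rw [Real.artanh', ← Real.exp_nat_mul]
    push_cast
    rw [show (2:ℝ) * (1/2 * Real.log ((1+x)/(1-x))) = Real.log ((1+x)/(1-x)) by ring,
      Real.exp_log hr]
  rw [← he, Real.sqrt_sq (Real.exp_pos _).le]

lemma h1_val (ν ε : ℝ) (hν : 0 < ν) (hc : 0 < Real.cos (ν*ε))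
    (hcs : ν * Real.sin (ν*ε) < Real.cos (ν*ε)) (hsn : 0 ≤ Real.sin (ν*ε)) :
    Real.cos (ν*ε) * Real.cosh (Real.artanh' (ν * Real.tan (ν*ε)))
      - ν * Real.sin (ν*ε) * Real.sinh (Real.artanh' (ν * Real.tan (ν*ε)))
    = Real.sqrt (1 - (1 + ν^2) * Real.sin (ν*ε)^2) := by
  have hpyth : Real.sin (ν*ε)^2 + Real.cos (ν*ε)^2 = 1 := Real.sin_sq_add_cos_sq (ν*ε)
  have htan : Real.tan (ν*ε) = Real.sin (ν*ε) / Real.cos (ν*ε) := Real.tan_eq_sin_div_cos _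
  set c := Real.cos (ν*ε) with hcdef
  set sn := Real.sin (ν*ε) with hsndef
  clear_value c sn
  have hx1 : ν * Real.tan (ν*ε) < 1 := by
    rw [htan, ← mul_div_assoc, div_lt_one hc]; exact hcs
  have hx0 : 0 ≤ ν * Real.tan (ν*ε) := by
    rw [htan]; positivity
  have hxm1 : -1 < ν * Real.tan (ν*ε) := by linarith
  have hr : (1 + ν * Real.tan (ν*ε)) / (1 - ν * Real.tan (ν*ε)) = (c + ν*sn) / (c - ν*sn) := by
    rw [htan]
    field_simp
  have hP : (0:ℝ) < c + ν*sn := by nlinarith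
  have hQ : (0:ℝ) < c - ν*sn := by linarith
  have hexp : Real.exp (Real.artanh' (ν * Real.tan (ν*ε)))
      = Real.sqrt (c + ν*sn) / Real.sqrt (c - ν*sn) := by
    rw [exp_artanh hxm1 hx1, hr, Real.sqrt_div hP.le]
  have hexpn : Real.exp (-Real.artanh' (ν * Real.tan (ν*ε)))
      = Real.sqrt (c - ν*sn) / Real.sqrt (c + ν*sn) := by
    rw [Real.exp_neg, hexp, inv_div]
  set P := Real.sqrt (c + ν*sn) with hPdef
  set Q := Real.sqrt (c - ν*sn) with hQdef
  have hP2 : P^2 = c + ν*sn := Real.sq_sqrt hP.le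
  have hQ2 : Q^2 = c - ν*sn := Real.sq_sqrt hQ.le
  have hPpos : 0 < P := Real.sqrt_pos.mpr hP
  have hQpos : 0 < Q := Real.sqrt_pos.mpr hQ
  have hPQ : P * Q = Real.sqrt ((c + ν*sn) * (c - ν*sn)) := (Real.sqrt_mul hP.le _).symm
  clear_value P Q
  rw [Real.cosh_eq, Real.sinh_eq, hexp, hexpn]
  have key : c * ((P/Q + Q/P)/2) - ν*sn * ((P/Q - Q/P)/2) = (c^2 - ν^2*sn^2) / (P*Q) := by
    field_simp
    linear_combination (c - ν*sn)*hP2 + (c + ν*sn)*hQ2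
  calc c * ((P/Q + Q/P)/2) - ν*sn * ((P/Q - Q/P)/2)
      = (c^2 - ν^2*sn^2) / (P*Q) := key
    _ = (1 - (1+ν^2)*sn^2) / Real.sqrt (1 - (1+ν^2)*sn^2) := by
        rw [hPQ, show (c + ν*sn) * (c - ν*sn) = 1 - (1+ν^2)*sn^2 by nlinarith]
        congr 1
        nlinarith
    _ = Real.sqrt (1 - (1+ν^2)*sn^2) := Real.div_sqrt

lemma sin_mul_div_tendsto (a : ℝ) (ha : a ≠ 0) :
    Tendsto (fun ε => Real.sin (a * ε) / ε) (nhdsWithin 0 (Set.Ioi 0)) (nhds a) := by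
  have hd : Tendsto (fun x : ℝ => Real.sin x / x) (nhdsWithin 0 {0}ᶜ) (nhds 1) := by
    have h := Real.hasDerivAt_sin 0
    rw [hasDerivAt_iff_tendsto_slope] at h
    have heq : slope Real.sin 0 = fun x : ℝ => Real.sin x / x := by
      funext x; rw [slope_def_field]; simp
    rw [heq, Real.cos_zero] at h
    exact h
  have hmap : Tendsto (fun ε : ℝ => a * ε) (nhdsWithin 0 (Set.Ioi 0)) (nhdsWithin 0 {0}ᶜ) := by
    apply tendsto_nhdsWithin_of_tendsto_nhds_of_eventually_within
    · have : Tendsto (fun ε : ℝ => a * ε) (nhds 0) (nhds (a * 0)) :=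
        (continuous_const.mul continuous_id).tendsto 0
      rw [mul_zero] at this
      exact this.mono_left nhdsWithin_le_nhds
    · filter_upwards [self_mem_nhdsWithin] with x hx
      exact Set.mem_compl_singleton_iff.mpr (mul_ne_zero ha (ne_of_gt hx))
  have hcomp : Tendsto (fun ε => a * (Real.sin (a*ε) / (a*ε)))
      (nhdsWithin 0 (Set.Ioi 0)) (nhds (a * 1)) := ((hd.comp hmap).const_mul a)
  rw [mul_one] at hcomp
  refine hcomp.congr' ?_
  filter_upwards [self_mem_nhdsWithin] with x hx
  have hx0 : (x:ℝ) ≠ 0 := ne_of_gt hx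
  field_simp

set_option maxHeartbeats 1000000 in
theorem slope_asymptotics (ν : ℝ) (hν1 : 1 < ν) (hν2 : ν < Real.sqrt 2)
    (tε : ℝ → ℝ)
    (htε : ∀ ε, tε ε = ν * Real.artanh' (ν * Real.tan (ν * ε)) + ν * ε)
    (h₁ : ℝ → ℝ → ℝ)
    (hh₁ : ∀ ε t, h₁ ε t =
      Real.cos (ν * ε) * Real.cosh ((t - ν * ε) / ν)
      - ν * Real.sin (ν * ε) * Real.sinh ((t - ν * ε) / ν))
    (s : ℝ → ℝ)
    (hs : ∀ ε, s ε =
      (Real.cos (6 * ε / ν) - h₁ ε (tε ε)) / (3 * ν * ε * (2 / ν ^ 2 - 1))) :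
    Tendsto (fun ε => s ε / Real.sin (6 * ε / ν)) (nhdsWithin 0 (Set.Ioi 0))
      (nhds ((ν ^ 6 + ν ^ 4 - 36) / (36 * (2 - ν ^ 2)))) := by
  have hν0 : 0 < ν := by linarith
  have hνsq : ν ^ 2 < 2 := by
    have := (Real.lt_sqrt hν0.le).mp hν2
    linarith
  have h2ν : (0:ℝ) < 2 - ν ^ 2 := by linarith
  -- the auxiliary function G
  set A : ℝ → ℝ := fun ε => 1 - (1 + ν^2) * Real.sin (ν*ε)^2 with hA
  set G : ℝ → ℝ := fun ε =>
    ((1 + ν^2) * (Real.sin (ν*ε)/ε)^2 - (Real.sin (6*ε/ν)/ε)^2) /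
    ((Real.cos (6*ε/ν) + Real.sqrt (A ε)) * (3*ν*(2/ν^2 - 1)) * (Real.sin (6*ε/ν)/ε))
    with hG
  -- limits of the pieces
  have hsin1 : Tendsto (fun ε => Real.sin (ν*ε)/ε) (nhdsWithin 0 (Set.Ioi 0)) (nhds ν) :=
    sin_mul_div_tendsto ν hν0.ne'
  have hsin2 : Tendsto (fun ε => Real.sin (6*ε/ν)/ε) (nhdsWithin 0 (Set.Ioi 0)) (nhds (6/ν)) := by
    have := sin_mul_div_tendsto (6/ν) (by positivity)
    simpa [show ∀ ε : ℝ, 6/ν*ε = 6*ε/ν from fun ε => by ring] using this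
  have hcos : Tendsto (fun ε => Real.cos (6*ε/ν) + Real.sqrt (A ε))
      (nhdsWithin 0 (Set.Ioi 0)) (nhds 2) := by
    have hco : Continuous fun ε : ℝ => Real.cos (6*ε/ν) + Real.sqrt (A ε) := by
      apply Continuous.add
      · exact Real.continuous_cos.comp (by continuity)
      · exact Real.continuous_sqrt.comp (by simp only [hA]; continuity)
    have h2 : Tendsto (fun ε : ℝ => Real.cos (6*ε/ν) + Real.sqrt (A ε))
        (nhdsWithin 0 (Set.Ioi 0)) (nhds (Real.cos (6*0/ν) + Real.sqrt (A 0))) :=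
      (hco.tendsto 0).mono_left nhdsWithin_le_nhds
    have hv : Real.cos (6*0/ν) + Real.sqrt (A 0) = 2 := by norm_num [hA]
    rwa [hv] at h2
  -- limit of G
  have hGlim : Tendsto G (nhdsWithin 0 (Set.Ioi 0))
      (nhds (((1 + ν^2) * ν^2 - (6/ν)^2) / (2 * (3*ν*(2/ν^2 - 1)) * (6/ν)))) := by
    apply Tendsto.div
    · exact ((hsin1.pow 2).const_mul _).sub (hsin2.pow 2)
    · exact (hcos.mul_const _).mul hsin2
    · have : (0:ℝ) < 2 * (3*ν*(2/ν^2 - 1)) * (6/ν) := by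
        have h1 : (0:ℝ) < 2/ν^2 - 1 := by
          rw [sub_pos, lt_div_iff₀ (by positivity)]
          linarith
        positivity
      exact this.ne'
  have hval : ((1 + ν^2) * ν^2 - (6/ν)^2) / (2 * (3*ν*(2/ν^2 - 1)) * (6/ν))
      = (ν ^ 6 + ν ^ 4 - 36) / (36 * (2 - ν ^ 2)) := by
    rw [div_eq_div_iff]
    · field_simp
      ring
    · have h1 : (0:ℝ) < 2/ν^2 - 1 := by
        rw [sub_pos, lt_div_iff₀ (by positivity)]
        linarith
      positivity
    · positivity
  rw [hval] at hGlim
  -- eventual equality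
  refine hGlim.congr' ?_
  have hδ : (0:ℝ) < min (1/(2*ν^2)) (ν/4) := by positivity
  filter_upwards [Ioo_mem_nhdsGT_of_mem (Set.mem_Ico.mpr ⟨le_refl 0, hδ⟩)] with ε hε
  obtain ⟨hε0, hεlt⟩ := hε
  have hε1 : ε < 1/(2*ν^2) := lt_of_lt_of_le hεlt (min_le_left _ _)
  have hε2 : ε < ν/4 := lt_of_lt_of_le hεlt (min_le_right _ _)
  have hνε1 : ν * ε < 1/2 := by
    have : ν * ε < ν * (1/(2*ν^2)) := by exact mul_lt_mul_of_pos_left hε1 hν0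
    calc ν * ε < ν * (1/(2*ν^2)) := this
      _ = 1/(2*ν) := by field_simp
      _ < 1/2 := by
          rw [div_lt_div_iff₀ (by positivity) (by norm_num)]
          linarith
  have hνεpos : 0 < ν * ε := by positivity
  have hπ : (3:ℝ) < Real.pi := Real.pi_gt_three
  -- basic trig facts at ν ε
  have hsnpos : 0 < Real.sin (ν*ε) :=
    Real.sin_pos_of_pos_of_lt_pi hνεpos (by linarith)
  have hcpos : 0 < Real.cos (ν*ε) := by
    have := Real.one_sub_sq_div_two_lt_cos (x := ν*ε) hνεpos.ne'
    nlinarith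
  have hcs : ν * Real.sin (ν*ε) < Real.cos (ν*ε) := by
    have hb := Real.one_sub_sq_div_two_lt_cos (x := ν*ε) hνεpos.ne'
    have hsl : Real.sin (ν*ε) < ν*ε := Real.sin_lt hνεpos
    have hν2e : ν^2 * ε < 1/2 := by
      calc ν^2 * ε < ν^2 * (1/(2*ν^2)) := mul_lt_mul_of_pos_left hε1 (by positivity)
        _ = 1/2 := by field_simp
    nlinarith
  -- facts at 6 ε / ν
  have h6pos : 0 < 6*ε/ν := by positivity
  have h6lt : 6*ε/ν < 3/2 := by
    rw [div_lt_iff₀ hν0]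
    linarith
  have hSpos : 0 < Real.sin (6*ε/ν) :=
    Real.sin_pos_of_pos_of_lt_pi h6pos (by linarith)
  have hCpos : 0 < Real.cos (6*ε/ν) :=
    Real.cos_pos_of_mem_Ioo ⟨by linarith, by linarith⟩
  -- A ε > 0
  have hApos : 0 < A ε := by
    simp only [hA]
    have hsl : Real.sin (ν*ε) < ν*ε := Real.sin_lt hνεpos
    have hsq : Real.sin (ν*ε)^2 < (1/2)^2 := by nlinarith
    nlinarith
  have hR2 : Real.sqrt (A ε) ^ 2 = A ε := Real.sq_sqrt hApos.le
  have hRpos : 0 < Real.sqrt (A ε) := Real.sqrt_pos.mpr hApos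
  -- rewrite s
  have hh : h₁ ε (tε ε) = Real.sqrt (A ε) := by
    rw [hh₁, htε]
    have harg : (ν * Real.artanh' (ν * Real.tan (ν * ε)) + ν * ε - ν * ε) / ν
        = Real.artanh' (ν * Real.tan (ν * ε)) := by
      field_simp
      ring
    rw [harg]
    exact h1_val ν ε hν0 hcpos hcs hsnpos.le
  rw [hG, hs, hh]
  beta_reduce
  -- algebraic identity
  have hpy6 : Real.sin (6*ε/ν)^2 + Real.cos (6*ε/ν)^2 = 1 := Real.sin_sq_add_cos_sq _
  set R := Real.sqrt (A ε) with hRdef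
  set C := Real.cos (6*ε/ν) with hCdef
  set S := Real.sin (6*ε/ν) with hSdef
  set sn := Real.sin (ν*ε) with hsndef
  have hAval : R^2 = 1 - (1 + ν^2) * sn^2 := by rw [hR2, hA]
  clear_value R C S sn
  have hd1 : (3 * ν * ε * (2 / ν ^ 2 - 1)) ≠ 0 := by
    have h1 : (0:ℝ) < 2/ν^2 - 1 := by
      rw [sub_pos, lt_div_iff₀ (by positivity)]
      linarith
    positivity
  have hd2 : ((C + R) * (3*ν*(2/ν^2 - 1)) * (S/ε)) ≠ 0 := by
    have h1 : (0:ℝ) < 2/ν^2 - 1 := by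
      rw [sub_pos, lt_div_iff₀ (by positivity)]
      linarith
    positivity
  have hd0 : (3 * ν * ε * (2 / ν ^ 2 - 1)) * S ≠ 0 := mul_ne_zero hd1 hSpos.ne'
  rw [div_div, div_eq_div_iff hd2 hd0]
  field_simp
  linear_combination hAval - hpy6
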